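/- For λ ∈ ℂ*, α ∈ ℂ, and any f ∈ ℂ[t] and integers i, j, the operators L_i acting on ℂ[t] by (L_i·f)(t) = λ^i (t - iα) f(t - i) satisfy L_i·(L_j·f) - L_j·(L_i·f) = (j - i) L_{i+j}·f, i.e., this action defines a representation of the centerless Virasoro (Witt) algebra on ℂ[t]. -/

import Mathlib

open Polynomial

/-- The action `L_i·f = λ^i (t - iα) f(t - i)` satisfies
`[L_i, L_j] = (j - i) L_{i+j}` on `ℂ[t]` (Witt algebra representation). -/
theorem stmt1 (lam : ℂ) (hlam : lam ≠ 0) (α : ℂ)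
    (L : ℤ → ℂ[X] → ℂ[X])
    (hL : ∀ (i : ℤ) (f : ℂ[X]),
      L i f = C (lam ^ i) * (X - C ((i : ℂ) * α)) * f.comp (X - C (i : ℂ)))
    (f : ℂ[X]) (i j : ℤ) :
    L i (L j f) - L j (L i f) = C ((j : ℂ) - (i : ℂ)) * L (i + j) f := by
  simp only [hL, mul_comp, sub_comp, C_comp, X_comp, comp_assoc,
    zpow_add₀ hlam]
  push_cast
  ring_nf
  rw [show X - C (i:ℂ) - C (j:ℂ) = X - C ((i:ℂ)+j) by rw [map_add]; ring]
  simp only [map_add, map_mul, map_neg]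
  ring
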